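/- Let D ⊂ ℝ^p be open, W: D → ℝ^p continuously differentiable, θ* ∈ D with W(θ*) = 0 and the derivative DW(θ*) invertible. Then for every d > 0 small enough there exist d', d'' > 0 such that: for any continuously differentiable perturbation δ: D → ℝ^p with sup_θ |δ(θ)| < d' and sup_θ ‖Dδ(θ)‖ < d'', the equation W(θ) + δ(θ) = 0 has exactly one solution in the closed ball of radius d around θ*. -/

import Mathlib

open Metric

/-- Quantitative implicit function theorem / stability of simple zeros: if `W(θ*) = 0` and
`DW(θ*)` is invertible, then for all sufficiently small `d > 0` there exist `d', d'' > 0`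
such that any `C¹` perturbation `δ` with `sup|δ| < d'` and `sup‖Dδ‖ < d''` yields exactly
one solution of `W(θ) + δ(θ) = 0` in the closed ball of radius `d` around `θ*`. -/
theorem stmt15 {p : ℕ} (D : Set (EuclideanSpace ℝ (Fin p))) (hD : IsOpen D)
    (W : EuclideanSpace ℝ (Fin p) → EuclideanSpace ℝ (Fin p))
    (hW : ContDiffOn ℝ 1 W D)
    (θs : EuclideanSpace ℝ (Fin p)) (hθs : θs ∈ D)
    (hroot : W θs = 0) (hinv : Function.Bijective (fderiv ℝ W θs)) :
    ∃ d₀ > 0, ∀ d : ℝ, 0 < d → d < d₀ →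
      ∃ d' > 0, ∃ d'' > 0,
        ∀ δ : EuclideanSpace ℝ (Fin p) → EuclideanSpace ℝ (Fin p),
          ContDiffOn ℝ 1 δ D →
          (∀ θ ∈ D, ‖δ θ‖ < d') →
          (∀ θ ∈ D, ‖fderivWithin ℝ δ D θ‖ < d'') →
          ∃! θ : EuclideanSpace ℝ (Fin p),
            θ ∈ closedBall θs d ∧ W θ + δ θ = 0 := by
  classical
  have hinv' : Function.Bijective (fderiv ℝ W θs).toLinearMap := by simpa using hinv
  let e := ((LinearEquiv.ofBijective (fderiv ℝ W θs).toLinearMap hinv').toContinuousLinearEquiv :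
    EuclideanSpace ℝ (Fin p) ≃L[ℝ] EuclideanSpace ℝ (Fin p))
  have he : ∀ x, e x = fderiv ℝ W θs x := fun x => by
    simp [e, LinearEquiv.coe_toContinuousLinearEquiv']
  let B : EuclideanSpace ℝ (Fin p) →L[ℝ] EuclideanSpace ℝ (Fin p) := (e.symm :
    EuclideanSpace ℝ (Fin p) →L[ℝ] EuclideanSpace ℝ (Fin p))
  have hBA : ∀ x, B (fderiv ℝ W θs x) = x := fun x => by
    show e.symm _ = x
    rw [← he]; exact e.symm_apply_apply x
  have hBinj : ∀ x, B x = 0 → x = 0 := fun x hx => by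
    have : x = e 0 := e.symm_apply_eq.mp hx
    simpa using this
  set c : ℝ := ‖B‖ + 1 with hc
  have hc0 : (0:ℝ) < c := by positivity
  have hBc : ‖B‖ ≤ c := le_add_of_nonneg_right zero_le_one
  have hcont : ContinuousOn (fderiv ℝ W) D := hW.continuousOn_fderiv_of_isOpen hD le_rfl
  have hcA : ContinuousAt (fderiv ℝ W) θs := hcont.continuousAt (hD.mem_nhds hθs)
  obtain ⟨r1, hr1, hball⟩ := Metric.isOpen_iff.1 hD θs hθs
  obtain ⟨r2, hr2, hcontr⟩ := Metric.continuousAt_iff.1 hcA (1/(4*c)) (by positivity)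
  refine ⟨min r1 r2 / 2, by positivity, ?_⟩
  intro d hd hdlt
  have hdr1 : d < r1 := by have := min_le_left r1 r2; linarith
  have hdr2 : d < r2 := by have := min_le_right r1 r2; linarith
  have hsubD : closedBall θs d ⊆ D := fun θ hθ => hball (lt_of_le_of_lt (mem_closedBall.1 hθ) hdr1)
  have hfder : ∀ θ ∈ closedBall θs d, ‖fderiv ℝ W θ - fderiv ℝ W θs‖ ≤ 1/(4*c) := by
    intro θ hθ
    have := hcontr (lt_of_le_of_lt (mem_closedBall.1 hθ) hdr2)
    rw [dist_eq_norm] at this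
    exact this.le
  refine ⟨d/(2*c), by positivity, 1/(4*c), by positivity, ?_⟩
  intro δ hδ hδ0 hδ1
  have hWd : ∀ θ ∈ closedBall θs d, DifferentiableAt ℝ W θ := fun θ hθ =>
    (hW.differentiableOn one_ne_zero).differentiableAt (hD.mem_nhds (hsubD hθ))
  have hδd : ∀ θ ∈ closedBall θs d, DifferentiableAt ℝ δ θ := fun θ hθ =>
    (hδ.differentiableOn one_ne_zero).differentiableAt (hD.mem_nhds (hsubD hθ))
  have hδ1' : ∀ θ ∈ D, ‖fderiv ℝ δ θ‖ < 1/(4*c) := by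
    intro θ hθ
    have := hδ1 θ hθ
    rwa [fderivWithin_of_isOpen hD hθ] at this
  set g : EuclideanSpace ℝ (Fin p) → EuclideanSpace ℝ (Fin p) :=
    fun θ => θ - B (W θ + δ θ) with hg
  have hgder : ∀ θ ∈ closedBall θs d, HasFDerivAt g
      (ContinuousLinearMap.id ℝ (EuclideanSpace ℝ (Fin p)) -
        B.comp (fderiv ℝ W θ + fderiv ℝ δ θ)) θ := by
    intro θ hθ
    have h3 : HasFDerivAt (fun θ => W θ + δ θ) (fderiv ℝ W θ + fderiv ℝ δ θ) θ :=
      (hWd θ hθ).hasFDerivAt.add (hδd θ hθ).hasFDerivAt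
    exact (hasFDerivAt_id θ).sub (B.hasFDerivAt.comp θ h3)
  have hgnorm : ∀ θ ∈ closedBall θs d,
      ‖ContinuousLinearMap.id ℝ (EuclideanSpace ℝ (Fin p)) -
        B.comp (fderiv ℝ W θ + fderiv ℝ δ θ)‖ ≤ 1/2 := by
    intro θ hθ
    have hrw : ContinuousLinearMap.id ℝ (EuclideanSpace ℝ (Fin p)) -
        B.comp (fderiv ℝ W θ + fderiv ℝ δ θ) =
        B.comp (fderiv ℝ W θs - (fderiv ℝ W θ + fderiv ℝ δ θ)) := by
      ext v
      simp [ContinuousLinearMap.comp_apply, map_sub, map_add, hBA]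
    rw [hrw]
    calc ‖B.comp (fderiv ℝ W θs - (fderiv ℝ W θ + fderiv ℝ δ θ))‖
        ≤ ‖B‖ * ‖fderiv ℝ W θs - (fderiv ℝ W θ + fderiv ℝ δ θ)‖ :=
          ContinuousLinearMap.opNorm_comp_le _ _
      _ ≤ c * (1/(4*c) + 1/(4*c)) := by
          refine mul_le_mul hBc ?_ (norm_nonneg _) hc0.le
          have h1 : ‖fderiv ℝ W θs - fderiv ℝ W θ‖ ≤ 1/(4*c) := by
            rw [norm_sub_rev]; exact hfder θ hθ
          have h2 : ‖fderiv ℝ δ θ‖ ≤ 1/(4*c) := (hδ1' θ (hsubD hθ)).le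
          calc ‖fderiv ℝ W θs - (fderiv ℝ W θ + fderiv ℝ δ θ)‖
              = ‖(fderiv ℝ W θs - fderiv ℝ W θ) - fderiv ℝ δ θ‖ := by rw [sub_add_eq_sub_sub]
            _ ≤ ‖fderiv ℝ W θs - fderiv ℝ W θ‖ + ‖fderiv ℝ δ θ‖ := norm_sub_le _ _
            _ ≤ 1/(4*c) + 1/(4*c) := add_le_add h1 h2
      _ = 1/2 := by field_simp; ring
  have hlip : ∀ x ∈ closedBall θs d, ∀ y ∈ closedBall θs d, ‖g y - g x‖ ≤ (1/2) * ‖y - x‖ := by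
    intro x hx y hy
    refine (convex_closedBall θs d).norm_image_sub_le_of_norm_fderiv_le
      (fun z hz => (hgder z hz).differentiableAt) (fun z hz => ?_) hx hy
    rw [(hgder z hz).fderiv]
    exact hgnorm z hz
  have hθsmem : θs ∈ closedBall θs d := mem_closedBall_self hd.le
  have hmaps : Set.MapsTo g (closedBall θs d) (closedBall θs d) := by
    intro θ hθ
    have h1 : ‖g θ - g θs‖ ≤ (1/2) * ‖θ - θs‖ := hlip θs hθsmem θ hθ
    have h2 : ‖g θs - θs‖ ≤ d/2 := by
      have hgθs : g θs - θs = -(B (δ θs)) := by simp [hg, hroot]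
      rw [hgθs, norm_neg]
      calc ‖B (δ θs)‖ ≤ ‖B‖ * ‖δ θs‖ := B.le_opNorm _
        _ ≤ c * (d/(2*c)) :=
            mul_le_mul hBc (hδ0 θs hθs).le (norm_nonneg _) hc0.le
        _ = d/2 := by field_simp
    have h3 : ‖θ - θs‖ ≤ d := by rwa [← dist_eq_norm, ← mem_closedBall]
    rw [mem_closedBall, dist_eq_norm]
    calc ‖g θ - θs‖ ≤ ‖g θ - g θs‖ + ‖g θs - θs‖ := by
          have := norm_add_le (g θ - g θs) (g θs - θs); simpa using this
      _ ≤ (1/2) * ‖θ - θs‖ + d/2 := add_le_add h1 h2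
      _ ≤ (1/2) * d + d/2 := by nlinarith
      _ = d := by ring
  -- fixed point iff equation
  have hfix_iff : ∀ θ, g θ = θ ↔ W θ + δ θ = 0 := by
    intro θ
    constructor
    · intro h
      have : B (W θ + δ θ) = 0 := by
        have := sub_eq_self.1 h
        simpa using this
      exact hBinj _ this
    · intro h
      show θ - B (W θ + δ θ) = θ
      rw [h, map_zero, sub_zero]
  -- existence via contraction
  haveI : Nonempty (closedBall θs d) := ⟨⟨θs, hθsmem⟩⟩
  haveI : CompleteSpace (closedBall θs d) :=
    (isClosed_closedBall (x := θs) (ε := d)).completeSpace_coe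
  set gr : closedBall θs d → closedBall θs d := Set.MapsTo.restrict g _ _ hmaps with hgr
  have hctr : ContractingWith (1/2 : NNReal) gr := by
    constructor
    · rw [← NNReal.coe_lt_coe]; norm_num
    · refine LipschitzWith.of_dist_le_mul fun x y => ?_
      have h := hlip y y.2 x x.2
      simp only [Subtype.dist_eq, Set.MapsTo.val_restrict_apply, dist_eq_norm]
      push_cast
      simpa [hgr] using h
  let θ₀ := hctr.fixedPoint gr
  have hθ₀ : gr θ₀ = θ₀ := hctr.fixedPoint_isFixedPt
  have hθ₀fix : g (θ₀ : EuclideanSpace ℝ (Fin p)) = θ₀ := by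
    have h := congrArg Subtype.val hθ₀
    simpa [hgr, Set.MapsTo.val_restrict_apply] using h
  refine ⟨θ₀, ⟨θ₀.2, (hfix_iff _).1 hθ₀fix⟩, ?_⟩
  intro y hy
  have hyfix : g y = y := (hfix_iff y).2 hy.2
  have := hlip θ₀ θ₀.2 y hy.1
  rw [hyfix, hθ₀fix] at this
  have h0 : ‖y - (θ₀ : EuclideanSpace ℝ (Fin p))‖ = 0 := by
    nlinarith [norm_nonneg (y - (θ₀ : EuclideanSpace ℝ (Fin p)))]
  have := norm_eq_zero.1 h0
  exact sub_eq_zero.1 this
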